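/- arXiv:1802.01965 — 3 statements merged into one kernel-verified Lean document; each statement's English description precedes it below -/
import Mathlib

section
/- For every ρ ∈ ℝ one has τ̂(ρ) > (1−κ) ρ and τ̂(ρ) > ρ; equivalently, for every τ ∈ ℝ, writing ρ(τ) = G'(τ) for the mean of r under the Gibbs measure λ_τ, one has τ > (1−κ) ρ(τ) and τ > ρ(τ). -/
open MeasureTheory Real Filter Set Topology

noncomputable def gibbsG (V : ℝ → ℝ) (τ : ℝ) : ℝ :=
  Real.log (∫ r : ℝ, Real.exp (τ * r - V r))

noncomputable def freeF (V : ℝ → ℝ) (ρ : ℝ) : ℝ :=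
  ⨆ τ : ℝ, (τ * ρ - gibbsG V τ)

noncomputable def tension (V : ℝ → ℝ) : ℝ → ℝ :=
  deriv (freeF V)

noncomputable def anharmonicV (κ : ℝ) (r : ℝ) : ℝ :=
  (1 - κ) / 2 * r ^ 2 + κ / 2 * r * max r 0

namespace Anh

lemma V_eq (κ r : ℝ) : anharmonicV κ r = (1 - κ)/2 * r^2 + κ/2 * (max r 0)^2 := by
  unfold anharmonicV
  rcases le_or_gt r 0 with h | h
  · rw [max_eq_right h]; ring
  · rw [max_eq_left h.le]; ring

lemma V_ge {κ : ℝ} (hκ0 : 0 ≤ κ) (r : ℝ) : (1-κ)/2 * r^2 ≤ anharmonicV κ r := by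
  rw [V_eq]
  nlinarith [sq_nonneg (max r 0)]

lemma V_le {κ : ℝ} (hκ0 : 0 ≤ κ) (r : ℝ) : anharmonicV κ r ≤ r^2/2 := by
  rw [V_eq]
  have h1 : (max r 0)^2 ≤ r^2 := by
    rcases le_or_gt r 0 with h | h
    · rw [max_eq_right h]; simpa using sq_nonneg r
    · rw [max_eq_left h.le]
  nlinarith

lemma V_cont (κ : ℝ) : Continuous (anharmonicV κ) := by
  unfold anharmonicV
  fun_prop

/-- basic gaussian-type integrability -/
lemma integrable_exp_quad (a c : ℝ) (hc : 0 < c) :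
    Integrable (fun r : ℝ => exp (a*r - c*r^2)) := by
  have key : ∀ r : ℝ, a*r - c*r^2 ≤ a^2/(2*c) + (-(c/2) * r^2) := by
    intro r
    rw [← sub_nonneg]
    have h : a^2/(2*c) + (-(c/2) * r^2) - (a*r - c*r^2) = (a - c*r)^2/(2*c) := by
      field_simp; ring
    rw [h]; positivity
  refine Integrable.mono' ((integrable_exp_neg_mul_sq (by positivity : (0:ℝ) < c/2)).const_mul
    (exp (a^2/(2*c)))) ?_ (Eventually.of_forall fun r => ?_)
  · exact (Continuous.rexp (by continuity)).aestronglyMeasurable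
  · rw [Real.norm_eq_abs, abs_of_pos (exp_pos _), ← Real.exp_add]
    exact exp_le_exp.2 (key r)

lemma abs_le_twoexp (r : ℝ) : |r| ≤ exp r + exp (-r) := by
  have h1 : |r| ≤ exp |r| := le_trans (by linarith) (add_one_le_exp |r|)
  rcases abs_cases r with ⟨h, _⟩ | ⟨h, _⟩ <;> rw [h] at h1 ⊢
  · exact h1.trans (by linarith [exp_pos (-r)])
  · exact h1.trans (by linarith [exp_pos r])

lemma sq_le_twoexp (r : ℝ) : r^2 ≤ 4 * (exp r + exp (-r)) := by
  have h1 : 1 + |r|/2 ≤ exp (|r|/2) := by linarith [add_one_le_exp (|r|/2)]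
  have h2 : r^2 ≤ 4 * exp |r| := by
    have h3 : exp |r| = exp (|r|/2) * exp (|r|/2) := by rw [← Real.exp_add]; ring_nf
    have h0 : (0:ℝ) ≤ 1 + |r|/2 := by positivity
    nlinarith [abs_nonneg r, sq_abs r]
  rcases abs_cases r with ⟨h, _⟩ | ⟨h, _⟩ <;> rw [h] at h2 <;>
    nlinarith [exp_pos r, exp_pos (-r)]

/-- integrability of `|r|^n exp(b|r| - c r²)` for n = 0,1,2 (packaged) -/
lemma integrable_abs_pow_exp_quad (n : ℕ) (hn : n ≤ 2) (b c : ℝ) (hc : 0 < c) :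
    Integrable (fun r : ℝ => |r|^n * exp (b*|r| - c*r^2)) := by
  have hmeas : AEStronglyMeasurable (fun r : ℝ => |r|^n * exp (b*|r| - c*r^2)) volume := by
    apply Continuous.aestronglyMeasurable
    continuity
  have habs : ∀ r : ℝ, exp (b*|r| - c*r^2) ≤ exp (b*r - c*r^2) + exp ((-b)*r - c*r^2) := by
    intro r
    rcases abs_cases r with ⟨h, _⟩ | ⟨h, _⟩ <;> rw [h]
    · nlinarith [exp_pos ((-b)*r - c*r^2)]
    · have : b * -r - c*r^2 = (-b)*r - c*r^2 := by ring
      rw [this]; nlinarith [exp_pos (b*r - c*r^2)]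
  -- |r|^n ≤ 4 * (exp r + exp (-r)) for n ≤ 2
  have hpow : ∀ r : ℝ, |r|^n ≤ 4 * (exp r + exp (-r)) := by
    intro r
    interval_cases n
    · simp; nlinarith [exp_pos r, exp_pos (-r), add_one_le_exp r, add_one_le_exp (-r)]
    · simp only [pow_one]
      nlinarith [abs_le_twoexp r, exp_pos r, exp_pos (-r)]
    · rw [sq_abs]; exact sq_le_twoexp r
  set g : ℝ → ℝ := fun r =>
      4 * (exp ((b+1)*r - c*r^2) + exp ((b-1)*r - c*r^2)
        + exp ((-b+1)*r - c*r^2) + exp ((-b-1)*r - c*r^2)) with hg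
  have hgint : Integrable g := by
    apply Integrable.const_mul
    exact (((integrable_exp_quad _ _ hc).add (integrable_exp_quad _ _ hc)).add
      (integrable_exp_quad _ _ hc)).add (integrable_exp_quad _ _ hc)
  refine Integrable.mono' hgint hmeas (Eventually.of_forall fun r => ?_)
  rw [Real.norm_eq_abs, abs_of_nonneg (by positivity)]
  have h1 := habs r
  have h2 := hpow r
  have e1 : exp r * exp (b*r - c*r^2) = exp ((b+1)*r - c*r^2) := by
    rw [← Real.exp_add]; ring_nf
  have e2 : exp (-r) * exp (b*r - c*r^2) = exp ((b-1)*r - c*r^2) := by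
    rw [← Real.exp_add]; ring_nf
  have e3 : exp r * exp ((-b)*r - c*r^2) = exp ((-b+1)*r - c*r^2) := by
    rw [← Real.exp_add]; ring_nf
  have e4 : exp (-r) * exp ((-b)*r - c*r^2) = exp ((-b-1)*r - c*r^2) := by
    rw [← Real.exp_add]; ring_nf
  have hpos1 : 0 < exp (b*r - c*r^2) := exp_pos _
  have hpos2 : 0 < exp ((-b)*r - c*r^2) := exp_pos _
  have hnn : 0 ≤ |r|^n := by positivity
  calc |r|^n * exp (b*|r| - c*r^2)
      ≤ (4 * (exp r + exp (-r))) * (exp (b*r - c*r^2) + exp ((-b)*r - c*r^2)) := by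
        apply mul_le_mul h2 h1 (le_of_lt (exp_pos _)) (by positivity)
    _ = g r := by rw [hg]; simp only []; rw [← e1, ← e2, ← e3, ← e4]; ring


-- assume Part A lemmas: V_eq V_ge V_le V_cont integrable_abs_pow_exp_quad

noncomputable def gE (κ τ r : ℝ) : ℝ := exp (τ*r - anharmonicV κ r)

lemma gE_pos (κ τ r : ℝ) : 0 < gE κ τ r := exp_pos _

lemma gE_cont (κ τ : ℝ) : Continuous (gE κ τ) := by
  unfold gE
  exact Continuous.rexp ((continuous_const.mul continuous_id).sub (V_cont κ))

variable {κ : ℝ} (hκ0 : 0 < κ) (hκ1 : κ < 1)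

include hκ0 hκ1 in
lemma integrable_weight (τ : ℝ) (n : ℕ) (hn : n ≤ 2) :
    Integrable (fun r : ℝ => |r|^n * gE κ τ r) := by
  have hc : 0 < (1-κ)/2 := by linarith
  refine Integrable.mono' (integrable_abs_pow_exp_quad n hn (|τ|+1) _ hc)
    (Continuous.aestronglyMeasurable ((continuous_abs.pow n).mul (gE_cont κ τ)))
    (Eventually.of_forall fun r => ?_)
  rw [Real.norm_eq_abs, abs_of_nonneg (mul_nonneg (by positivity) (gE_pos κ τ r).le)]
  apply mul_le_mul_of_nonneg_left _ (by positivity)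
  apply exp_le_exp.2
  have h1 : τ * r ≤ (|τ|+1) * |r| := by
    calc τ * r ≤ |τ * r| := le_abs_self _
    _ = |τ| * |r| := abs_mul _ _
    _ ≤ (|τ|+1) * |r| := by nlinarith [abs_nonneg r, abs_nonneg τ]
  have h2 := V_ge hκ0.le r
  linarith

include hκ0 hκ1 in
lemma integrable_gE (τ : ℝ) : Integrable (fun r : ℝ => gE κ τ r) := by
  have := integrable_weight hκ0 hκ1 τ 0 (by norm_num)
  simpa using this

include hκ0 hκ1 in
lemma integrable_mul_gE (τ : ℝ) : Integrable (fun r : ℝ => r * gE κ τ r) := by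
  refine (integrable_weight hκ0 hκ1 τ 1 (by norm_num)).mono'
    (Continuous.aestronglyMeasurable (continuous_id.mul (gE_cont κ τ)))
    (Eventually.of_forall fun r => ?_)
  rw [Real.norm_eq_abs, abs_mul, abs_of_pos (gE_pos κ τ r), pow_one]

include hκ0 hκ1 in
lemma integrable_sq_gE (τ : ℝ) : Integrable (fun r : ℝ => r^2 * gE κ τ r) := by
  refine (integrable_weight hκ0 hκ1 τ 2 (by norm_num)).mono'
    (Continuous.aestronglyMeasurable ((continuous_pow 2).mul (gE_cont κ τ)))
    (Eventually.of_forall fun r => ?_)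
  rw [Real.norm_eq_abs, abs_mul, abs_pow, abs_of_pos (gE_pos κ τ r), sq_abs]

noncomputable def Zf (κ τ : ℝ) : ℝ := ∫ r : ℝ, gE κ τ r
noncomputable def Mf (κ τ : ℝ) : ℝ := ∫ r : ℝ, r * gE κ τ r
noncomputable def Qf (κ τ : ℝ) : ℝ := ∫ r : ℝ, r^2 * gE κ τ r

include hκ0 hκ1 in
lemma Zf_pos (τ : ℝ) : 0 < Zf κ τ :=
  integral_exp_pos (integrable_gE hκ0 hκ1 τ)

include hκ0 hκ1 in
lemma hasDerivAt_Zf (τ : ℝ) : HasDerivAt (Zf κ) (Mf κ τ) τ := by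
  have hc : 0 < (1-κ)/2 := by linarith
  have key := hasDerivAt_integral_of_dominated_loc_of_deriv_le (μ := volume)
    (F := fun τ r => gE κ τ r) (F' := fun τ r => r * gE κ τ r)
    (bound := fun r => |r| * exp ((|τ|+1)*|r| - (1-κ)/2*r^2)) (x₀ := τ)
    (Metric.ball_mem_nhds τ one_pos)
    (Eventually.of_forall fun τ' => (gE_cont κ τ').aestronglyMeasurable)
    (integrable_gE hκ0 hκ1 τ)
    (Continuous.aestronglyMeasurable (continuous_id.mul (gE_cont κ τ)))
    (Eventually.of_forall fun r => fun τ' hτ' => ?_)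
    (by simpa using integrable_abs_pow_exp_quad 1 one_le_two (|τ|+1) _ hc)
    (Eventually.of_forall fun r => fun τ' _ => ?_)
  · exact key.2
  · -- bound
    rw [Real.norm_eq_abs, abs_mul, abs_of_pos (gE_pos κ τ' r)]
    apply mul_le_mul_of_nonneg_left _ (abs_nonneg r)
    apply exp_le_exp.2
    have hτ'' : |τ'| ≤ |τ| + 1 := by
      have := mem_ball_iff_norm.1 hτ'
      calc |τ'| = |τ' - τ + τ| := by ring_nf
      _ ≤ |τ' - τ| + |τ| := abs_add_le _ _
      _ ≤ |τ| + 1 := by rw [Real.norm_eq_abs] at this; linarith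
    have h1 : τ' * r ≤ (|τ|+1) * |r| := by
      calc τ' * r ≤ |τ' * r| := le_abs_self _
      _ = |τ'| * |r| := abs_mul _ _
      _ ≤ (|τ|+1) * |r| := mul_le_mul_of_nonneg_right hτ'' (abs_nonneg r)
    have h2 := V_ge hκ0.le r
    linarith
  · -- differentiability in τ'
    have : HasDerivAt (fun x : ℝ => x * r - anharmonicV κ r) r τ' := by
      simpa using (hasDerivAt_mul_const r (x := τ')).sub_const (anharmonicV κ r)
    simpa [gE, mul_comm] using this.exp


lemma hasDerivAt_gE_tau (κ r τ' : ℝ) :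
    HasDerivAt (fun x : ℝ => gE κ x r) (r * gE κ τ' r) τ' := by
  have h : HasDerivAt (fun x : ℝ => x * r - anharmonicV κ r) r τ' := by
    simpa using (hasDerivAt_mul_const r).sub_const (anharmonicV κ r)
  simpa [gE, mul_comm] using h.exp

include hκ0 hκ1 in
lemma hasDerivAt_Mf (τ : ℝ) : HasDerivAt (Mf κ) (Qf κ τ) τ := by
  have hc : 0 < (1-κ)/2 := by linarith
  have key := hasDerivAt_integral_of_dominated_loc_of_deriv_le (μ := volume)
    (F := fun τ' r => r * gE κ τ' r) (F' := fun τ' r => r^2 * gE κ τ' r)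
    (bound := fun r => |r|^2 * exp ((|τ|+1)*|r| - (1-κ)/2*r^2)) (x₀ := τ)
    (Metric.ball_mem_nhds τ one_pos)
    (Eventually.of_forall fun τ' => (continuous_id.mul (gE_cont κ τ')).aestronglyMeasurable)
    (integrable_mul_gE hκ0 hκ1 τ)
    (Continuous.aestronglyMeasurable ((continuous_pow 2).mul (gE_cont κ τ)))
    (Eventually.of_forall fun r => fun τ' hτ' => ?_)
    (integrable_abs_pow_exp_quad 2 le_rfl (|τ|+1) _ hc)
    (Eventually.of_forall fun r => fun τ' _ => ?_)
  · exact key.2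
  · rw [Real.norm_eq_abs, abs_mul, abs_of_pos (gE_pos κ τ' r), abs_pow]
    apply mul_le_mul_of_nonneg_left _ (by positivity : (0:ℝ) ≤ |r|^2)
    apply exp_le_exp.2
    have hτ'' : |τ'| ≤ |τ| + 1 := by
      have := mem_ball_iff_norm.1 hτ'
      calc |τ'| = |τ' - τ + τ| := by ring_nf
      _ ≤ |τ' - τ| + |τ| := abs_add_le _ _
      _ ≤ |τ| + 1 := by rw [Real.norm_eq_abs] at this; linarith
    have h1 : τ' * r ≤ (|τ|+1) * |r| := by
      calc τ' * r ≤ |τ' * r| := le_abs_self _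
      _ = |τ'| * |r| := abs_mul _ _
      _ ≤ (|τ|+1) * |r| := mul_le_mul_of_nonneg_right hτ'' (abs_nonneg r)
    have h2 := V_ge hκ0.le r
    linarith
  · have h := (hasDerivAt_gE_tau κ r τ').const_mul r
    exact h.congr_deriv (by ring)




-- derivative of max r 0 ^ 2
lemma hasDerivAt_maxsq (r : ℝ) : HasDerivAt (fun x : ℝ => max x 0 ^ 2) (2 * max r 0) r := by
  rcases lt_trichotomy r 0 with h | h | h
  · have hev : (fun x : ℝ => max x 0 ^ 2) =ᶠ[𝓝 r] fun _ => (0:ℝ) := by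
      filter_upwards [Iio_mem_nhds h] with x hx
      rw [max_eq_right (le_of_lt hx)]; norm_num
    have := (hasDerivAt_const r (0:ℝ)).congr_of_eventuallyEq hev
    simpa [max_eq_right h.le] using this
  · subst h
    have h0 : (2 : ℝ) * max (0:ℝ) 0 = 0 := by simp
    rw [hasDerivAt_iff_tendsto_slope, h0]
    refine squeeze_zero_norm (fun x => ?_) (a := fun x : ℝ => |x|) ?_
    · simp only [slope_def_field, Real.norm_eq_abs]
      rcases le_or_gt x 0 with hx | hx
      · rw [max_eq_right hx]; simp
      · rw [max_eq_left hx.le]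
        have hxx : (x ^ 2 - (max (0:ℝ) 0) ^ 2) / (x - 0) = x := by
          rw [max_self]
          field_simp
          ring
        rw [hxx]
    · have : Tendsto (fun x : ℝ => |x|) (𝓝 0) (𝓝 |0|) := continuous_abs.tendsto 0
      simpa using this.mono_left nhdsWithin_le_nhds
  · have hev : (fun x : ℝ => max x 0 ^ 2) =ᶠ[𝓝 r] fun x => x ^ 2 := by
      filter_upwards [Ioi_mem_nhds h] with x hx
      rw [max_eq_left (le_of_lt hx)]
    have h2 : HasDerivAt (fun x : ℝ => x^2) (2*r) r := by
      simpa using (hasDerivAt_pow 2 r)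
    have := h2.congr_of_eventuallyEq hev
    simpa [max_eq_left h.le] using this

lemma hasDerivAt_V (κ r : ℝ) :
    HasDerivAt (anharmonicV κ) ((1-κ)*r + κ * max r 0) r := by
  have h1 : HasDerivAt (fun x : ℝ => (1-κ)/2 * x^2) ((1-κ)*r) r := by
    have := (hasDerivAt_pow 2 r).const_mul ((1-κ)/2)
    exact this.congr_deriv (by rw [show (2:ℕ) - 1 = 1 from rfl]; push_cast; ring)
  have h2 := (hasDerivAt_maxsq r).const_mul (κ/2)
  have h3 : HasDerivAt (fun x : ℝ => (1-κ)/2 * x^2 + κ/2 * (max x 0 ^2)) _ r := h1.add h2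
  have he : (fun x : ℝ => (1-κ)/2 * x^2 + κ/2 * (max x 0 ^2)) = anharmonicV κ := by
    funext x; rw [V_eq]
  rw [he] at h3
  convert h3 using 1; ring

lemma hasDerivAt_gE_r (κ τ r : ℝ) :
    HasDerivAt (gE κ τ) ((τ - ((1-κ)*r + κ * max r 0)) * gE κ τ r) r := by
  have h := ((hasDerivAt_id r).const_mul τ).sub (hasDerivAt_V κ r)
  simp only [mul_one, id] at h
  have h2 := h.exp
  unfold gE
  convert h2 using 1
  · rfl
  · simp only [Pi.sub_apply]; ring

include hκ0 hκ1 in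
lemma tendsto_gE_atTop (τ : ℝ) : Tendsto (gE κ τ) atTop (𝓝 0) := by
  have hc : 0 < (1-κ)/2 := by linarith
  refine squeeze_zero_norm' ?_ (tendsto_exp_atBot.comp tendsto_neg_atTop_atBot)
  filter_upwards [eventually_ge_atTop (max 0 ((|τ|+1)/((1-κ)/2)))] with r hr
  have hr0 : 0 ≤ r := le_trans (le_max_left _ _) hr
  have hr1 : (|τ|+1)/((1-κ)/2) ≤ r := le_trans (le_max_right _ _) hr
  have hr2 : |τ|+1 ≤ (1-κ)/2 * r := by
    rw [div_le_iff₀ hc] at hr1; linarith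
  rw [Real.norm_eq_abs, abs_of_pos (gE_pos κ τ r)]
  apply exp_le_exp.2
  have h2 := V_ge hκ0.le r
  have h3 : τ * r ≤ |τ| * r := mul_le_mul_of_nonneg_right (le_abs_self τ) hr0
  have h4 : (|τ|+1) * r ≤ (1-κ)/2 * r * r := mul_le_mul_of_nonneg_right hr2 hr0
  nlinarith [abs_nonneg τ]

include hκ0 hκ1 in
lemma tendsto_gE_atBot (τ : ℝ) : Tendsto (gE κ τ) atBot (𝓝 0) := by
  have hc : 0 < (1-κ)/2 := by linarith
  refine squeeze_zero_norm' ?_ Real.tendsto_exp_atBot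
  filter_upwards [eventually_le_atBot (min 0 (-((|τ|+1)/((1-κ)/2))))] with r hr
  have hr0 : r ≤ 0 := le_trans hr (min_le_left _ _)
  have hr1 : r ≤ -((|τ|+1)/((1-κ)/2)) := le_trans hr (min_le_right _ _)
  have hr1' : (|τ|+1)/((1-κ)/2) ≤ -r := by linarith
  have hr2 : |τ|+1 ≤ (1-κ)/2 * (-r) := by
    rw [div_le_iff₀ hc] at hr1'; linarith
  rw [Real.norm_eq_abs, abs_of_pos (gE_pos κ τ r)]
  apply exp_le_exp.2
  have h2 := V_ge hκ0.le r
  have h3 : τ * r ≤ |τ| * (-r) := by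
    calc τ * r ≤ |τ * r| := le_abs_self _
    _ = |τ| * |r| := abs_mul _ _
    _ = |τ| * (-r) := by rw [abs_of_nonpos hr0]
  have h4 : (|τ|+1) * (-r) ≤ (1-κ)/2 * (-r) * (-r) :=
    mul_le_mul_of_nonneg_right hr2 (by linarith)
  nlinarith [abs_nonneg τ]

noncomputable def Pf (κ τ : ℝ) : ℝ := ∫ r : ℝ, max r 0 * gE κ τ r
noncomputable def Nf (κ τ : ℝ) : ℝ := ∫ r : ℝ, (max r 0 - r) * gE κ τ r

include hκ0 hκ1 in
lemma integrable_max_gE (τ : ℝ) : Integrable (fun r : ℝ => max r 0 * gE κ τ r) := by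
  refine (integrable_mul_gE hκ0 hκ1 τ).abs.mono'
    (Continuous.aestronglyMeasurable ((continuous_id.max continuous_const).mul (gE_cont κ τ)))
    (Eventually.of_forall fun r => ?_)
  rw [Real.norm_eq_abs, abs_mul, abs_mul, abs_of_pos (gE_pos κ τ r)]
  apply mul_le_mul_of_nonneg_right _ (gE_pos κ τ r).le
  rcases le_or_gt r 0 with h | h
  · rw [max_eq_right h]; simp [abs_nonneg]
  · rw [max_eq_left h.le]

include hκ0 hκ1 in
lemma Pf_pos (τ : ℝ) : 0 < Pf κ τ := by
  rw [Pf, integral_pos_iff_support_of_nonneg]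
  · have hsub : Ioi (0:ℝ) ⊆ Function.support fun r => max r 0 * gE κ τ r := by
      intro r hr
      have : max r 0 = r := max_eq_left (le_of_lt hr)
      simp only [Function.mem_support, this]
      exact ne_of_gt (mul_pos hr (gE_pos κ τ r))
    calc (0:ENNReal) < volume (Ioi (0:ℝ)) := by rw [Real.volume_Ioi]; exact ENNReal.zero_lt_top
    _ ≤ _ := measure_mono hsub
  · intro r
    exact mul_nonneg (le_max_right r 0) (gE_pos κ τ r).le
  · exact integrable_max_gE hκ0 hκ1 τ

include hκ0 hκ1 in
lemma Nf_pos (τ : ℝ) : 0 < Nf κ τ := by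
  rw [Nf, integral_pos_iff_support_of_nonneg]
  · have hsub : Iio (0:ℝ) ⊆ Function.support fun r => (max r 0 - r) * gE κ τ r := by
      intro r hr
      have h1 : max r 0 = 0 := max_eq_right (le_of_lt hr)
      simp only [Function.mem_support, h1]
      have : (0:ℝ) - r > 0 := by simpa using hr
      exact ne_of_gt (mul_pos this (gE_pos κ τ r))
    calc (0:ENNReal) < volume (Iio (0:ℝ)) := by rw [Real.volume_Iio]; exact ENNReal.zero_lt_top
    _ ≤ _ := measure_mono hsub
  · intro r
    exact mul_nonneg (by simp [le_max_left]) (gE_pos κ τ r).le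
  · exact ((integrable_max_gE hκ0 hκ1 τ).sub (integrable_mul_gE hκ0 hκ1 τ)).congr
      (Eventually.of_forall fun r => by simp only [Pi.sub_apply]; ring)

include hκ0 hκ1 in
lemma Nf_eq (τ : ℝ) : Nf κ τ = Pf κ τ - Mf κ τ := by
  rw [Nf, Pf, Mf, ← integral_sub (integrable_max_gE hκ0 hκ1 τ) (integrable_mul_gE hκ0 hκ1 τ)]
  congr 1; funext r; ring

include hκ0 hκ1 in
lemma ibp (τ : ℝ) : τ * Zf κ τ = (1-κ) * Mf κ τ + κ * Pf κ τ := by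
  set f' : ℝ → ℝ := fun r => (τ - ((1-κ)*r + κ * max r 0)) * gE κ τ r with hf'
  have hderiv : ∀ r : ℝ, HasDerivAt (gE κ τ) (f' r) r := fun r => hasDerivAt_gE_r κ τ r
  have hint : Integrable f' := by
    have h1 : Integrable (fun r : ℝ => |τ| * gE κ τ r + |r| * gE κ τ r) := by
      apply Integrable.add ((integrable_gE hκ0 hκ1 τ).const_mul _)
      simpa using integrable_weight hκ0 hκ1 τ 1 (by norm_num)
    refine h1.mono' (Continuous.aestronglyMeasurable ?_) (Eventually.of_forall fun r => ?_)
    · exact ((continuous_const.sub ((continuous_const.mul continuous_id).add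
        (continuous_const.mul (continuous_id.max continuous_const)))).mul (gE_cont κ τ))
    · rw [Real.norm_eq_abs, abs_mul, abs_of_pos (gE_pos κ τ r), ← add_mul]
      apply mul_le_mul_of_nonneg_right _ (gE_pos κ τ r).le
      have h2 : |max r 0| ≤ |r| := by
        rcases le_or_gt r 0 with h | h
        · rw [max_eq_right h]; simp
        · rw [max_eq_left h.le]
      calc |τ - ((1-κ)*r + κ * max r 0)| ≤ |τ| + |(1-κ)*r + κ * max r 0| := abs_sub _ _
        _ ≤ |τ| + ((1-κ)*|r| + κ*|max r 0|) := by
            gcongr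
            calc |(1-κ)*r + κ * max r 0| ≤ |(1-κ)*r| + |κ * max r 0| := abs_add_le _ _
            _ = (1-κ)*|r| + κ*|max r 0| := by
                rw [abs_mul, abs_mul, abs_of_pos (by linarith : (0:ℝ) < 1-κ),
                  abs_of_pos hκ0]
        _ ≤ |τ| + |r| := by nlinarith [abs_nonneg r]
  have hIic : ∫ r in Iic (0:ℝ), f' r = gE κ τ 0 - 0 := by
    apply integral_Iic_of_hasDerivAt_of_tendsto'
      (fun x _ => hderiv x) hint.integrableOn (tendsto_gE_atBot hκ0 hκ1 τ)
  have hIoi : ∫ r in Ioi (0:ℝ), f' r = 0 - gE κ τ 0 := by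
    apply integral_Ioi_of_hasDerivAt_of_tendsto'
      (fun x _ => hderiv x) hint.integrableOn (tendsto_gE_atTop hκ0 hκ1 τ)
  have hzero : ∫ r : ℝ, f' r = 0 := by
    rw [← intervalIntegral.integral_Iic_add_Ioi hint.integrableOn hint.integrableOn, hIic, hIoi]
    ring
  have hsplit : ∫ r : ℝ, f' r
      = τ * Zf κ τ - ((1-κ) * Mf κ τ + κ * Pf κ τ) := by
    rw [hf']
    have e : (fun r : ℝ => (τ - ((1-κ)*r + κ * max r 0)) * gE κ τ r)
        = fun r => τ * gE κ τ r - ((1-κ) * (r * gE κ τ r) + κ * (max r 0 * gE κ τ r)) := by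
      funext r; ring
    have hA1 : Integrable (fun r : ℝ => (1-κ) * (r * gE κ τ r)) :=
      (integrable_mul_gE hκ0 hκ1 τ).const_mul _
    have hA2 : Integrable (fun r : ℝ => κ * (max r 0 * gE κ τ r)) :=
      (integrable_max_gE hκ0 hκ1 τ).const_mul _
    have hA : Integrable (fun r : ℝ => (1-κ) * (r * gE κ τ r) + κ * (max r 0 * gE κ τ r)) :=
      hA1.add hA2
    have hT : Integrable (fun r : ℝ => τ * gE κ τ r) := (integrable_gE hκ0 hκ1 τ).const_mul _
    rw [e, integral_sub hT hA, integral_add hA1 hA2,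
      integral_const_mul, integral_const_mul, integral_const_mul]
    rfl
  rw [hsplit] at hzero
  linarith

include hκ0 hκ1 in
lemma key_ineqs (τ : ℝ) :
    (1-κ) * (Mf κ τ / Zf κ τ) < τ ∧ Mf κ τ / Zf κ τ < τ := by
  have hZ := Zf_pos hκ0 hκ1 τ
  have h1 := ibp hκ0 hκ1 τ
  have hP := Pf_pos hκ0 hκ1 τ
  have hN := Nf_pos hκ0 hκ1 τ
  have hNe := Nf_eq hκ0 hκ1 τ
  have h2 : κ * Pf κ τ = κ * Mf κ τ + κ * Nf κ τ := by rw [hNe]; ring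
  have h3 : (1-κ) * Mf κ τ = Mf κ τ - κ * Mf κ τ := by ring
  constructor
  · have he : (1-κ) * (Mf κ τ / Zf κ τ) = ((1-κ) * Mf κ τ) / Zf κ τ := by ring
    rw [he, div_lt_iff₀ hZ]
    nlinarith [mul_pos hκ0 hP]
  · rw [div_lt_iff₀ hZ]
    nlinarith [mul_pos hκ0 hN]

include hκ0 hκ1 in
lemma hasDerivAt_G (τ : ℝ) :
    HasDerivAt (gibbsG (anharmonicV κ)) (Mf κ τ / Zf κ τ) τ := by
  have he : gibbsG (anharmonicV κ) = fun τ => Real.log (Zf κ τ) := rfl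
  rw [he]
  exact (hasDerivAt_Zf hκ0 hκ1 τ).log (Zf_pos hκ0 hκ1 τ).ne'




noncomputable def Hf (κ : ℝ) : ℝ → ℝ := fun τ => Mf κ τ / Zf κ τ

include hκ0 hκ1 in
lemma var_pos (τ : ℝ) : 0 < Qf κ τ * Zf κ τ - Mf κ τ ^ 2 := by
  have hZ := Zf_pos hκ0 hκ1 τ
  set m := Mf κ τ / Zf κ τ with hm
  have hint : Integrable (fun r : ℝ => (r - m)^2 * gE κ τ r) := by
    have h : Integrable (fun r : ℝ =>
        r^2 * gE κ τ r - (2*m) * (r * gE κ τ r) + m^2 * gE κ τ r) :=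
      ((integrable_sq_gE hκ0 hκ1 τ).sub ((integrable_mul_gE hκ0 hκ1 τ).const_mul _)).add
        ((integrable_gE hκ0 hκ1 τ).const_mul _)
    exact h.congr (Eventually.of_forall fun r => by ring)
  have hpos : 0 < ∫ r : ℝ, (r - m)^2 * gE κ τ r := by
    rw [integral_pos_iff_support_of_nonneg
      (fun r => mul_nonneg (sq_nonneg _) (gE_pos κ τ r).le) hint]
    have hsub : Ioi m ⊆ Function.support fun r => (r - m)^2 * gE κ τ r := by
      intro r hr
      have : r - m ≠ 0 := sub_ne_zero.2 (ne_of_gt hr)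
      simp only [Function.mem_support]
      exact ne_of_gt (mul_pos (by positivity) (gE_pos κ τ r))
    calc (0:ENNReal) < volume (Ioi m) := by rw [Real.volume_Ioi]; exact ENNReal.zero_lt_top
    _ ≤ _ := measure_mono hsub
  have hexp : ∫ r : ℝ, (r - m)^2 * gE κ τ r
      = Qf κ τ - (2*m) * Mf κ τ + m^2 * Zf κ τ := by
    have e : (fun r : ℝ => (r - m)^2 * gE κ τ r)
        = fun r => r^2 * gE κ τ r - (2*m) * (r * gE κ τ r) + m^2 * gE κ τ r := by
      funext r; ring
    have hB1 : Integrable (fun r : ℝ => (2*m) * (r * gE κ τ r)) :=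
      (integrable_mul_gE hκ0 hκ1 τ).const_mul _
    have hB2 : Integrable (fun r : ℝ => m^2 * gE κ τ r) :=
      (integrable_gE hκ0 hκ1 τ).const_mul _
    have hB3 : Integrable (fun r : ℝ => r^2 * gE κ τ r - (2*m) * (r * gE κ τ r)) :=
      (integrable_sq_gE hκ0 hκ1 τ).sub hB1
    rw [e, integral_add hB3 hB2, integral_sub (integrable_sq_gE hκ0 hκ1 τ) hB1,
      integral_const_mul, integral_const_mul]
    rfl
  rw [hexp] at hpos
  have : Qf κ τ - (2*m) * Mf κ τ + m^2 * Zf κ τ = (Qf κ τ * Zf κ τ - Mf κ τ^2)/Zf κ τ := by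
    rw [hm]; field_simp; ring
  rw [this] at hpos
  exact (div_pos_iff.1 hpos).resolve_right (fun h => absurd hZ (not_lt.2 h.2.le)) |>.1

include hκ0 hκ1 in
lemma hasDerivAt_Hf (τ : ℝ) :
    HasDerivAt (Hf κ) ((Qf κ τ * Zf κ τ - Mf κ τ * Mf κ τ) / Zf κ τ ^ 2) τ :=
  (hasDerivAt_Mf hκ0 hκ1 τ).div (hasDerivAt_Zf hκ0 hκ1 τ) (Zf_pos hκ0 hκ1 τ).ne'

include hκ0 hκ1 in
lemma deriv_Hf_pos (τ : ℝ) : 0 < deriv (Hf κ) τ := by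
  rw [(hasDerivAt_Hf hκ0 hκ1 τ).deriv]
  have h := var_pos hκ0 hκ1 τ
  have hZ := Zf_pos hκ0 hκ1 τ
  apply div_pos (by nlinarith) (by positivity)

include hκ0 hκ1 in
lemma strictMono_Hf : StrictMono (Hf κ) :=
  strictMono_of_deriv_pos (deriv_Hf_pos hκ0 hκ1)

include hκ0 hκ1 in
lemma continuous_Hf : Continuous (Hf κ) := by
  have : Differentiable ℝ (Hf κ) := fun τ => (hasDerivAt_Hf hκ0 hκ1 τ).differentiableAt
  exact this.continuous

-- upper bound giving surjectivity upward
include hκ0 hκ1 in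
lemma Nf_le (τ : ℝ) (hτ : 0 ≤ τ) : Nf κ τ ≤ Nf κ 0 := by
  unfold Nf
  apply integral_mono ?_ ?_ ?_
  · exact ((integrable_max_gE hκ0 hκ1 τ).sub (integrable_mul_gE hκ0 hκ1 τ)).congr
      (Eventually.of_forall fun r => by simp only [Pi.sub_apply]; ring)
  · exact ((integrable_max_gE hκ0 hκ1 0).sub (integrable_mul_gE hκ0 hκ1 0)).congr
      (Eventually.of_forall fun r => by simp only [Pi.sub_apply]; ring)
  · intro r
    rcases le_or_gt r 0 with h | h
    · have h1 : max r 0 = 0 := max_eq_right h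
      have h2 : gE κ τ r ≤ gE κ 0 r := by
        unfold gE
        apply exp_le_exp.2
        have : τ * r ≤ 0 := mul_nonpos_iff.2 (Or.inl ⟨hτ, h⟩)
        linarith
      simp only [h1]
      have : 0 ≤ 0 - r := by linarith
      exact mul_le_mul_of_nonneg_left h2 this
    · have h1 : max r 0 = r := max_eq_left h.le
      simp [h1]

include hκ0 hκ1 in
lemma Zf_ge (τ : ℝ) (hτ : 0 ≤ τ) : exp (-(1:ℝ)/2) ≤ Zf κ τ := by
  have h1 : ∫ r in Ioc (0:ℝ) 1, gE κ τ r ≤ Zf κ τ :=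
    setIntegral_le_integral (integrable_gE hκ0 hκ1 τ)
      (Eventually.of_forall fun r => (gE_pos κ τ r).le)
  have h2 : ∫ r in Ioc (0:ℝ) 1, exp (-(1:ℝ)/2) ≤ ∫ r in Ioc (0:ℝ) 1, gE κ τ r := by
    apply setIntegral_mono_on (integrableOn_const (by simp [Real.volume_Ioc]))
      ((integrable_gE hκ0 hκ1 τ).integrableOn) measurableSet_Ioc
    intro r hr
    unfold gE
    apply exp_le_exp.2
    have h3 := V_le hκ0.le r
    have h4 : r^2 ≤ 1 := by nlinarith [hr.1.le, hr.2]
    have h5 : 0 ≤ τ * r := mul_nonneg hτ hr.1.le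
    linarith
  have h3 : ∫ _ in Ioc (0:ℝ) 1, exp (-(1:ℝ)/2) = exp (-(1:ℝ)/2) := by
    rw [setIntegral_const]
    simp [Real.volume_Ioc]
  linarith

include hκ0 hκ1 in
lemma Hf_lower (τ : ℝ) (hτ : 0 ≤ τ) :
    τ - κ * Nf κ 0 * exp ((1:ℝ)/2) ≤ Hf κ τ := by
  have hZ := Zf_pos hκ0 hκ1 τ
  have hN0 := Nf_pos hκ0 hκ1 0
  have hNle := Nf_le hκ0 hκ1 τ hτ
  have hNnn : 0 ≤ Nf κ τ := (Nf_pos hκ0 hκ1 τ).le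
  have hZge := Zf_ge hκ0 hκ1 τ hτ
  -- from ibp and Nf_eq : Mf = τ Zf - κ Nf
  have h1 := ibp hκ0 hκ1 τ
  have h2 := Nf_eq hκ0 hκ1 τ
  have hM : Mf κ τ = τ * Zf κ τ - κ * Nf κ τ := by nlinarith [h1, h2]
  have hHf : Hf κ τ = τ - κ * Nf κ τ / Zf κ τ := by
    unfold Hf
    rw [hM]
    field_simp
  rw [hHf]
  have hbound : κ * Nf κ τ / Zf κ τ ≤ κ * Nf κ 0 * exp ((1:ℝ)/2) := by
    have hNZ : Nf κ τ / Zf κ τ ≤ Nf κ 0 * exp ((1:ℝ)/2) := by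
      rw [div_le_iff₀ hZ]
      have he : exp (-(1:ℝ)/2) * exp ((1:ℝ)/2) = 1 := by
        rw [← Real.exp_add]; norm_num
      calc Nf κ τ ≤ Nf κ 0 := hNle
      _ = Nf κ 0 * (exp (-(1:ℝ)/2) * exp ((1:ℝ)/2)) := by rw [he, mul_one]
      _ ≤ Nf κ 0 * exp ((1:ℝ)/2) * Zf κ τ := by
          have := mul_le_mul_of_nonneg_left hZge (by positivity : (0:ℝ) ≤ exp ((1:ℝ)/2))
          calc Nf κ 0 * (exp (-(1:ℝ)/2) * exp ((1:ℝ)/2))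
              = Nf κ 0 * (exp ((1:ℝ)/2) * exp (-(1:ℝ)/2)) := by ring
            _ ≤ Nf κ 0 * (exp ((1:ℝ)/2) * Zf κ τ) := by
                apply mul_le_mul_of_nonneg_left _ hN0.le
                exact mul_le_mul_of_nonneg_left hZge (by positivity)
            _ = Nf κ 0 * exp ((1:ℝ)/2) * Zf κ τ := by ring
    calc κ * Nf κ τ / Zf κ τ = κ * (Nf κ τ / Zf κ τ) := by ring
    _ ≤ κ * (Nf κ 0 * exp ((1:ℝ)/2)) := mul_le_mul_of_nonneg_left hNZ hκ0.le
    _ = κ * Nf κ 0 * exp ((1:ℝ)/2) := by ring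
  linarith

include hκ0 hκ1 in
lemma Hf_lt_self (τ : ℝ) : Hf κ τ < τ := (key_ineqs hκ0 hκ1 τ).2

include hκ0 hκ1 in
lemma Hf_surj : Function.Surjective (Hf κ) := by
  intro ρ
  set b := max 0 (ρ + κ * Nf κ 0 * exp ((1:ℝ)/2)) with hb
  have hbnn : 0 ≤ b := le_max_left _ _
  have hbge : ρ + κ * Nf κ 0 * exp ((1:ℝ)/2) ≤ b := le_max_right _ _
  have hHb : ρ ≤ Hf κ b := by
    have := Hf_lower hκ0 hκ1 b hbnn
    linarith
  have hHa : Hf κ ρ < ρ := Hf_lt_self hκ0 hκ1 ρ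
  have hab : ρ ≤ b := by
    by_contra h
    push_neg at h
    have := (strictMono_Hf hκ0 hκ1) h
    linarith
  have hsub := intermediate_value_Icc hab ((continuous_Hf hκ0 hκ1).continuousOn)
  have : ρ ∈ Icc (Hf κ ρ) (Hf κ b) := ⟨hHa.le, hHb⟩
  obtain ⟨t, _, ht⟩ := hsub this
  exact ⟨t, ht⟩

-- the inverse function
noncomputable def Hiso (hκ0 : 0 < κ) (hκ1 : κ < 1) : ℝ ≃o ℝ :=
  StrictMono.orderIsoOfSurjective (Hf κ) (strictMono_Hf hκ0 hκ1) (Hf_surj hκ0 hκ1)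

noncomputable def Tf (hκ0 : 0 < κ) (hκ1 : κ < 1) : ℝ → ℝ := fun ρ => (Hiso hκ0 hκ1).symm ρ

lemma Hf_Tf (ρ : ℝ) : Hf κ (Tf hκ0 hκ1 ρ) = ρ :=
  StrictMono.orderIsoOfSurjective_self_symm_apply _ _ _ _

include hκ0 hκ1 in
lemma continuous_Tf : Continuous (Tf hκ0 hκ1) := (Hiso hκ0 hκ1).symm.continuous

-- supporting line lemma for a function with monotone derivative
lemma support_line {f h : ℝ → ℝ} (hd : ∀ x, HasDerivAt f (h x) x) (hm : Monotone h)
    (x y : ℝ) : f x + h x * (y - x) ≤ f y := by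
  rcases lt_trichotomy x y with hxy | hxy | hxy
  · obtain ⟨c, hc, hceq⟩ := exists_hasDerivAt_eq_slope f h hxy
      (fun z _ => (hd z).continuousAt.continuousWithinAt)
      (fun z _ => hd z)
    have h1 : h x ≤ h c := hm (le_of_lt hc.1)
    have h2 : h c * (y - x) = f y - f x := by
      rw [hceq, div_mul_cancel₀]
      exact sub_ne_zero.2 (ne_of_gt hxy)
    nlinarith
  · subst hxy; simp
  · obtain ⟨c, hc, hceq⟩ := exists_hasDerivAt_eq_slope f h hxy
      (fun z _ => (hd z).continuousAt.continuousWithinAt)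
      (fun z _ => hd z)
    have h1 : h c ≤ h x := hm (le_of_lt hc.2)
    have h2 : h c * (x - y) = f x - f y := by
      rw [hceq, div_mul_cancel₀]
      exact sub_ne_zero.2 (ne_of_gt hxy)
    nlinarith

include hκ0 hκ1 in
lemma freeF_eq (ρ : ℝ) :
    freeF (anharmonicV κ) ρ = Tf hκ0 hκ1 ρ * ρ - gibbsG (anharmonicV κ) (Tf hκ0 hκ1 ρ) := by
  set t := Tf hκ0 hκ1 ρ with htd
  have hHt : Hf κ t = ρ := Hf_Tf hκ0 hκ1 ρ
  have key : ∀ τ : ℝ, τ * ρ - gibbsG (anharmonicV κ) τ ≤ t * ρ - gibbsG (anharmonicV κ) t := by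
    intro τ
    have := support_line (f := gibbsG (anharmonicV κ)) (h := Hf κ)
      (hasDerivAt_G hκ0 hκ1) (strictMono_Hf hκ0 hκ1).monotone t τ
    rw [hHt] at this
    linarith
  unfold freeF
  apply le_antisymm
  · exact ciSup_le key
  · exact le_ciSup ⟨t * ρ - gibbsG (anharmonicV κ) t, by
      rintro y ⟨τ, rfl⟩; exact key τ⟩ t

include hκ0 hκ1 in
lemma hasDerivAt_Tf (ρ : ℝ) :
    HasDerivAt (Tf hκ0 hκ1) ((deriv (Hf κ) (Tf hκ0 hκ1 ρ))⁻¹) ρ := by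
  apply HasDerivAt.of_local_left_inverse
    ((continuous_Tf hκ0 hκ1).continuousAt)
    ((hasDerivAt_Hf hκ0 hκ1 (Tf hκ0 hκ1 ρ)).congr_deriv
      (hasDerivAt_Hf hκ0 hκ1 (Tf hκ0 hκ1 ρ)).deriv.symm)
    (ne_of_gt (deriv_Hf_pos hκ0 hκ1 _))
    (Eventually.of_forall fun y => Hf_Tf hκ0 hκ1 y)

include hκ0 hκ1 in
lemma hasDerivAt_freeF (ρ : ℝ) :
    HasDerivAt (freeF (anharmonicV κ)) (Tf hκ0 hκ1 ρ) ρ := by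
  have he : freeF (anharmonicV κ)
      = fun ρ => Tf hκ0 hκ1 ρ * ρ - gibbsG (anharmonicV κ) (Tf hκ0 hκ1 ρ) :=
    funext (freeF_eq hκ0 hκ1)
  rw [he]
  set s := (deriv (Hf κ) (Tf hκ0 hκ1 ρ))⁻¹ with hs
  have hT := hasDerivAt_Tf hκ0 hκ1 ρ
  have h1 : HasDerivAt (fun ρ => Tf hκ0 hκ1 ρ * ρ) (s * ρ + Tf hκ0 hκ1 ρ * 1) ρ :=
    hT.mul (hasDerivAt_id ρ)
  have hG : HasDerivAt (gibbsG (anharmonicV κ)) (Mf κ (Tf hκ0 hκ1 ρ) / Zf κ (Tf hκ0 hκ1 ρ))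
      (Tf hκ0 hκ1 ρ) := hasDerivAt_G hκ0 hκ1 _
  have hGH : Mf κ (Tf hκ0 hκ1 ρ) / Zf κ (Tf hκ0 hκ1 ρ) = ρ := Hf_Tf hκ0 hκ1 ρ
  rw [hGH] at hG
  have h2 : HasDerivAt (fun ρ => gibbsG (anharmonicV κ) (Tf hκ0 hκ1 ρ)) (ρ * s) ρ :=
    hG.comp ρ hT
  have h3 := h1.sub h2
  exact h3.congr_deriv (by ring)

end Anh


/-- for the potential `V(r) = (1/2)(1-κ)r² + (1/2)κ r |r|₊` with
`0 < κ < 1/3`, one has `τ̂(ρ) > (1-κ)ρ` and `τ̂(ρ) > ρ` for every `ρ`; equivalently,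
with `ρ(τ) = G'(τ)` the mean of `r` under the Gibbs measure,
`τ > (1-κ) ρ(τ)` and `τ > ρ(τ)` for every `τ`. -/
theorem tension_gt_linear_for_anharmonicV
    (κ : ℝ) (hκ0 : 0 < κ) (hκ1 : κ < 1/3) :
    (∀ ρ : ℝ, (1 - κ) * ρ < tension (anharmonicV κ) ρ ∧ ρ < tension (anharmonicV κ) ρ) ∧
    (∀ τ : ℝ, (1 - κ) * deriv (gibbsG (anharmonicV κ)) τ < τ ∧
      deriv (gibbsG (anharmonicV κ)) τ < τ) := by
  have hκ1' : κ < 1 := by linarith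
  constructor
  · intro ρ
    have hten : tension (anharmonicV κ) ρ = Anh.Tf hκ0 hκ1' ρ := by
      unfold tension
      exact (Anh.hasDerivAt_freeF hκ0 hκ1' ρ).deriv
    have hρ : Anh.Mf κ (Anh.Tf hκ0 hκ1' ρ) / Anh.Zf κ (Anh.Tf hκ0 hκ1' ρ) = ρ :=
      Anh.Hf_Tf hκ0 hκ1' ρ
    have hk := Anh.key_ineqs hκ0 hκ1' (Anh.Tf hκ0 hκ1' ρ)
    rw [hρ] at hk
    rw [hten]
    exact hk
  · intro τ
    have hd : deriv (gibbsG (anharmonicV κ)) τ = Anh.Mf κ τ / Anh.Zf κ τ :=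
      (Anh.hasDerivAt_G hκ0 hκ1' τ).deriv
    rw [hd]
    exact Anh.key_ineqs hκ0 hκ1' τ
end

section
/- Let N, l ∈ ℕ with 1 ≤ l and 2l ≤ N, let u_1, …, u_N be real numbers, and let J : [0,1] → ℝ be continuously differentiable. Then |(1/N) Σ_{i=l}^{N−l+1} (1/l) Σ_{|j|<l} ((l−|j|)/l) (J(i/N) − J((i+j)/N)) u_i| ≤ ‖J'‖_∞ · (l/N) · ((1/N) Σ_{i=1}^N u_i²)^{1/2}. -/
open Finset Real

/-- for `1 ≤ l`, `2l ≤ N`, real numbers `u_1, …, u_N` and a `C¹` test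
function `J`,
`|(1/N) Σ_{i=l}^{N-l+1} (1/l) Σ_{|j|<l} ((l-|j|)/l)(J(i/N) - J((i+j)/N)) u_i|
  ≤ ‖J'‖_∞ (l/N) ((1/N) Σ_{i=1}^N u_i²)^{1/2}`,
where `‖J'‖_∞ = sup_{x ∈ [0,1]} |J'(x)|`. -/
theorem smoothing_error_bound
    (N l : ℕ) (hl : 1 ≤ l) (hlN : 2 * l ≤ N)
    (u : ℕ → ℝ) (J : ℝ → ℝ) (hJ : ContDiff ℝ 1 J) :
    |(1 / (N : ℝ)) * ∑ i ∈ Finset.Icc l (N - l + 1),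
        (1 / (l : ℝ)) * ∑ j ∈ Finset.Ioo (-(l : ℤ)) (l : ℤ),
          ((((l : ℤ) - |j|) : ℤ) : ℝ) / (l : ℝ)
            * (J ((i : ℝ) / N) - J (((i : ℝ) + (j : ℝ)) / N)) * u i|
      ≤ (⨆ x : Set.Icc (0:ℝ) 1, |deriv J (x : ℝ)|) * ((l : ℝ) / N)
          * Real.sqrt ((1 / (N : ℝ)) * ∑ i ∈ Finset.Icc 1 N, (u i) ^ 2) := by
  have hN2 : 2 ≤ N := le_trans (by omega) hlN
  have hN0 : (0:ℝ) < N := by exact_mod_cast Nat.lt_of_lt_of_le (by norm_num) hN2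
  have hl0 : (0:ℝ) < l := by exact_mod_cast hl
  set M := ⨆ x : Set.Icc (0:ℝ) 1, |deriv J (x : ℝ)| with hMdef
  have hcont : Continuous (deriv J) := hJ.continuous_deriv le_rfl
  have hbdd : BddAbove (Set.range fun x : Set.Icc (0:ℝ) 1 => |deriv J (x : ℝ)|) := by
    have h := (isCompact_Icc (a := (0:ℝ)) (b := 1)).bddAbove_image
      (hcont.abs.continuousOn (s := Set.Icc 0 1))
    rwa [Set.image_eq_range] at h
  have hMb : ∀ x ∈ Set.Icc (0:ℝ) 1, |deriv J x| ≤ M := fun x hx =>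
    le_ciSup hbdd (⟨x, hx⟩ : Set.Icc (0:ℝ) 1)
  have hM0 : 0 ≤ M := le_trans (abs_nonneg _) (hMb 0 ⟨le_rfl, zero_le_one⟩)
  have hLip : ∀ a ∈ Set.Icc (0:ℝ) 1, ∀ b ∈ Set.Icc (0:ℝ) 1, |J a - J b| ≤ M * |a - b| := by
    intro a ha b hb
    have := (convex_Icc (0:ℝ) 1).norm_image_sub_le_of_norm_deriv_le
      (fun x _ => (hJ.differentiable one_ne_zero).differentiableAt)
      (fun x hx => hMb x hx) hb ha
    simpa [Real.norm_eq_abs] using this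
  -- per-i bound
  have key : ∀ i ∈ Finset.Icc l (N - l + 1),
      |(1 / (l : ℝ)) * ∑ j ∈ Finset.Ioo (-(l : ℤ)) (l : ℤ),
          ((((l : ℤ) - |j|) : ℤ) : ℝ) / (l : ℝ)
            * (J ((i : ℝ) / N) - J (((i : ℝ) + (j : ℝ)) / N)) * u i|
        ≤ M * ((l : ℝ) / N) * |u i| := by
    intro i hi
    rw [Finset.mem_Icc] at hi
    obtain ⟨hi1, hi2⟩ := hi
    have hiN' : i ≤ N := by omega
    have hiN : (i : ℝ) / N ∈ Set.Icc (0:ℝ) 1 := by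
      constructor
      · positivity
      · rw [div_le_one hN0]
        exact_mod_cast hiN'
    have hterm : ∀ j ∈ Finset.Ioo (-(l : ℤ)) (l : ℤ),
        |((((l : ℤ) - |j|) : ℤ) : ℝ) / (l : ℝ)
            * (J ((i : ℝ) / N) - J (((i : ℝ) + (j : ℝ)) / N)) * u i|
          ≤ (l : ℝ) / 4 * (M / N) * |u i| := by
      intro j hj
      rw [Finset.mem_Ioo] at hj
      obtain ⟨hjl, hjr'⟩ := hj
      have hj1 : |j| ≤ (l : ℤ) - 1 := abs_le.mpr ⟨by omega, by omega⟩
      have hjr : |(j : ℝ)| ≤ (l : ℝ) := by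
        have h : ((|j| : ℤ) : ℝ) ≤ ((l : ℤ) : ℝ) := by exact_mod_cast le_trans hj1 (by omega)
        simpa [Int.cast_abs] using h
      have h1 : (0 : ℤ) ≤ (i : ℤ) + j := by omega
      have h2 : (i : ℤ) + j ≤ (N : ℤ) := by omega
      have hijN : ((i : ℝ) + (j : ℝ)) / N ∈ Set.Icc (0:ℝ) 1 := by
        constructor
        · apply div_nonneg _ hN0.le
          exact_mod_cast h1
        · rw [div_le_one hN0]
          exact_mod_cast h2
      have hJd : |J ((i : ℝ) / N) - J (((i : ℝ) + (j : ℝ)) / N)| ≤ M * (|(j : ℝ)| / N) := by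
        have h := hLip _ hiN _ hijN
        have heq : (i : ℝ) / N - ((i : ℝ) + (j : ℝ)) / N = -(j : ℝ) / N := by ring
        rwa [heq, abs_div, abs_neg, abs_of_pos hN0] at h
      rw [abs_mul, abs_mul]
      have hc0 : (0:ℝ) ≤ ((((l : ℤ) - |j|) : ℤ) : ℝ) / (l : ℝ) := by
        apply div_nonneg _ hl0.le
        exact_mod_cast (by omega : (0:ℤ) ≤ (l : ℤ) - |j|)
      have hcabs : |((((l : ℤ) - |j|) : ℤ) : ℝ) / (l : ℝ)| = ((l : ℝ) - |(j : ℝ)|) / (l : ℝ) := by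
        rw [abs_of_nonneg hc0]
        congr 1
        push_cast [Int.cast_abs]
        ring
      rw [hcabs]
      have hkey : ((l : ℝ) - |(j : ℝ)|) / (l : ℝ) * |J ((i : ℝ) / N) - J (((i : ℝ) + (j : ℝ)) / N)|
          ≤ (l : ℝ) / 4 * (M / N) := by
        calc ((l : ℝ) - |(j : ℝ)|) / (l : ℝ) * |J ((i : ℝ) / N) - J (((i : ℝ) + (j : ℝ)) / N)|
            ≤ ((l : ℝ) - |(j : ℝ)|) / (l : ℝ) * (M * (|(j : ℝ)| / N)) := by
              apply mul_le_mul_of_nonneg_left hJd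
              apply div_nonneg _ hl0.le
              linarith
          _ = (((l : ℝ) - |(j : ℝ)|) * |(j : ℝ)|) / (l : ℝ) * (M / N) := by ring
          _ ≤ (l : ℝ) / 4 * (M / N) := by
              apply mul_le_mul_of_nonneg_right _ (by positivity)
              rw [div_le_div_iff₀ hl0 (by norm_num : (0:ℝ) < 4)]
              nlinarith [sq_nonneg ((l : ℝ) - 2 * |(j : ℝ)|), abs_nonneg (j : ℝ)]
      exact mul_le_mul_of_nonneg_right hkey (abs_nonneg _)
    have hcardj : (Finset.Ioo (-(l : ℤ)) (l : ℤ)).card = 2 * l - 1 := by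
      rw [Int.card_Ioo]
      omega
    calc |(1 / (l : ℝ)) * ∑ j ∈ Finset.Ioo (-(l : ℤ)) (l : ℤ),
          ((((l : ℤ) - |j|) : ℤ) : ℝ) / (l : ℝ)
            * (J ((i : ℝ) / N) - J (((i : ℝ) + (j : ℝ)) / N)) * u i|
        ≤ (1 / (l : ℝ)) * ∑ j ∈ Finset.Ioo (-(l : ℤ)) (l : ℤ),
            |((((l : ℤ) - |j|) : ℤ) : ℝ) / (l : ℝ)
              * (J ((i : ℝ) / N) - J (((i : ℝ) + (j : ℝ)) / N)) * u i| := by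
          rw [abs_mul, abs_of_nonneg (by positivity : (0:ℝ) ≤ 1 / (l:ℝ))]
          exact mul_le_mul_of_nonneg_left (Finset.abs_sum_le_sum_abs _ _) (by positivity)
      _ ≤ (1 / (l : ℝ)) * ∑ _j ∈ Finset.Ioo (-(l : ℤ)) (l : ℤ),
            (l : ℝ) / 4 * (M / N) * |u i| :=
          mul_le_mul_of_nonneg_left (Finset.sum_le_sum hterm) (by positivity)
      _ = ((2 * l - 1 : ℕ) : ℝ) / 4 * (M / N * |u i|) := by
          rw [Finset.sum_const, hcardj, nsmul_eq_mul]
          field_simp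
      _ ≤ M * ((l : ℝ) / N) * |u i| := by
          have hX : (0:ℝ) ≤ M / N * |u i| := by positivity
          have hc : ((2 * l - 1 : ℕ) : ℝ) / 4 ≤ (l : ℝ) := by
            have h : ((2 * l - 1 : ℕ) : ℝ) ≤ 2 * (l : ℝ) := by
              have h2 : (2 * l - 1 : ℕ) ≤ 2 * l := by omega
              calc ((2 * l - 1 : ℕ) : ℝ) ≤ ((2 * l : ℕ) : ℝ) := by exact_mod_cast h2
                _ = 2 * (l : ℝ) := by push_cast; ring
            linarith
          calc ((2 * l - 1 : ℕ) : ℝ) / 4 * (M / N * |u i|)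
              ≤ (l : ℝ) * (M / N * |u i|) := mul_le_mul_of_nonneg_right hc hX
            _ = M * ((l : ℝ) / N) * |u i| := by ring
  -- combine
  have step1 : |(1 / (N : ℝ)) * ∑ i ∈ Finset.Icc l (N - l + 1),
        (1 / (l : ℝ)) * ∑ j ∈ Finset.Ioo (-(l : ℤ)) (l : ℤ),
          ((((l : ℤ) - |j|) : ℤ) : ℝ) / (l : ℝ)
            * (J ((i : ℝ) / N) - J (((i : ℝ) + (j : ℝ)) / N)) * u i|
      ≤ M * ((l : ℝ) / N) * ((1 / (N : ℝ)) * ∑ i ∈ Finset.Icc 1 N, |u i|) := by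
    rw [abs_mul, abs_of_nonneg (by positivity : (0:ℝ) ≤ 1 / (N:ℝ))]
    calc (1 / (N : ℝ)) * |∑ i ∈ Finset.Icc l (N - l + 1),
          (1 / (l : ℝ)) * ∑ j ∈ Finset.Ioo (-(l : ℤ)) (l : ℤ),
            ((((l : ℤ) - |j|) : ℤ) : ℝ) / (l : ℝ)
              * (J ((i : ℝ) / N) - J (((i : ℝ) + (j : ℝ)) / N)) * u i|
        ≤ (1 / (N : ℝ)) * ∑ i ∈ Finset.Icc l (N - l + 1), M * ((l : ℝ) / N) * |u i| := by
          apply mul_le_mul_of_nonneg_left _ (by positivity)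
          exact le_trans (Finset.abs_sum_le_sum_abs _ _) (Finset.sum_le_sum key)
      _ ≤ (1 / (N : ℝ)) * ∑ i ∈ Finset.Icc 1 N, M * ((l : ℝ) / N) * |u i| := by
          apply mul_le_mul_of_nonneg_left _ (by positivity)
          apply Finset.sum_le_sum_of_subset_of_nonneg
          · intro x hx
            rw [Finset.mem_Icc] at *
            omega
          · intro i _ _
            positivity
      _ = M * ((l : ℝ) / N) * ((1 / (N : ℝ)) * ∑ i ∈ Finset.Icc 1 N, |u i|) := by
          rw [← Finset.mul_sum]
          ring
  refine le_trans step1 ?_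
  apply mul_le_mul_of_nonneg_left _ (by positivity)
  -- Cauchy-Schwarz: (1/N) Σ |u i| ≤ sqrt ((1/N) Σ u i ^ 2)
  have hcard : (Finset.Icc 1 N).card = N := by
    rw [Nat.card_Icc]; omega
  have hCS : (∑ i ∈ Finset.Icc 1 N, |u i|) ^ 2 ≤ (N : ℝ) * ∑ i ∈ Finset.Icc 1 N, (u i) ^ 2 := by
    have h := sq_sum_le_card_mul_sum_sq (s := Finset.Icc 1 N) (f := fun i => |u i|)
    simp only [sq_abs] at h
    rw [hcard] at h
    exact h
  apply Real.le_sqrt_of_sq_le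
  calc ((1 / (N : ℝ)) * ∑ i ∈ Finset.Icc 1 N, |u i|) ^ 2
      = (∑ i ∈ Finset.Icc 1 N, |u i|) ^ 2 * (1 / (N : ℝ)) ^ 2 := by ring
    _ ≤ ((N : ℝ) * ∑ i ∈ Finset.Icc 1 N, (u i) ^ 2) * (1 / (N : ℝ)) ^ 2 :=
        mul_le_mul_of_nonneg_right hCS (by positivity)
    _ = (1 / (N : ℝ)) * ∑ i ∈ Finset.Icc 1 N, (u i) ^ 2 := by
        field_simp
end

section
/- Let l ≥ 1, τ ∈ ℝ, and α > 0 with 2c₂α/l < 1. Then, under the product Gibbs measure λ_τ^{⊗l} on ℝ^l, the block average of V' satisfies ∫_{ℝ^l} exp(α ((1/l) Σ_{j=1}^l V'(r_j) − τ)²) dλ_τ^{⊗l}(r_1,…,r_l) ≤ (1 − 2c₂α/l)^{−1/2}. -/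
open MeasureTheory Real Finset

/-- The Gibbs probability measure `λ_τ` with density `exp(τ r - V(r) - G(τ))`
with respect to Lebesgue measure. -/
noncomputable def gibbsMeasure (V : ℝ → ℝ) (τ : ℝ) : Measure ℝ :=
  (volume : Measure ℝ).withDensity
    (fun r => ENNReal.ofReal (Real.exp (τ * r - V r - gibbsG V τ)))

/-- A function with monotone derivative lies above its tangent lines. -/
lemma tangent_le {f f' : ℝ → ℝ} (hf : ∀ x, HasDerivAt f (f' x) x)
    (hmono : Monotone f') (x y : ℝ) : f x + f' x * (y - x) ≤ f y := by
  rcases lt_trichotomy x y with h | h | h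
  · obtain ⟨c, hc, hceq⟩ := exists_hasDerivAt_eq_slope f f' h
      (fun z _ => (hf z).continuousAt.continuousWithinAt) (fun z _ => hf z)
    rw [eq_div_iff (sub_ne_zero.2 h.ne')] at hceq
    have h2 : f' x ≤ f' c := hmono hc.1.le
    nlinarith [hc.1, hc.2]
  · simp [h]
  · obtain ⟨c, hc, hceq⟩ := exists_hasDerivAt_eq_slope f f' h
      (fun z _ => (hf z).continuousAt.continuousWithinAt) (fun z _ => hf z)
    rw [eq_div_iff (sub_ne_zero.2 h.ne')] at hceq
    have h2 : f' c ≤ f' x := hmono hc.2.le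
    nlinarith [hc.1, hc.2]

section Gibbs

variable {V : ℝ → ℝ} {c₁ c₂ τ : ℝ}

lemma derivV_diff (hV : ContDiff ℝ 2 V) : Differentiable ℝ (deriv V) := by
  have h2 : ContDiff ℝ ((1:ℕ∞) + 1) V := by convert hV using 2; rfl
  exact ((contDiff_succ_iff_deriv.mp h2).2.2).differentiable (by simp)

/-- key tangent bound: `b * V'(r) ≤ V r - V (r - b) + c₂ b² / 2`. -/
lemma derivV_bound (hV : ContDiff ℝ 2 V)
    (hhigh : ∀ r : ℝ, deriv (deriv V) r ≤ c₂) (b r : ℝ) :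
    b * deriv V r ≤ V r - V (r - b) + c₂ * b ^ 2 / 2 := by
  have hV1 : Differentiable ℝ V := hV.differentiable two_ne_zero
  have hV2 : Differentiable ℝ (deriv V) := derivV_diff hV
  have hd : ∀ x : ℝ, HasDerivAt (fun u => c₂ / 2 * u ^ 2 - V u) (c₂ * x - deriv V x) x := by
    intro x
    have h1 : HasDerivAt (fun u : ℝ => c₂ / 2 * u ^ 2) (c₂ * x) x := by
      have := (hasDerivAt_pow 2 x).const_mul (c₂ / 2)
      exact this.congr_deriv (by push_cast; ring)
    exact h1.sub (hV1 x).hasDerivAt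
  have hd' : ∀ x : ℝ, HasDerivAt (fun u => c₂ * u - deriv V u) (c₂ - deriv (deriv V) x) x := by
    intro x
    have h1 : HasDerivAt (fun u : ℝ => c₂ * u) c₂ x := by
      simpa using (hasDerivAt_id x).const_mul c₂
    exact h1.sub (hV2 x).hasDerivAt
  have hmono : Monotone (fun u => c₂ * u - deriv V u) := by
    refine monotone_of_deriv_nonneg (fun x => (hd' x).differentiableAt) (fun x => ?_)
    rw [(hd' x).deriv]; linarith [hhigh x]
  have := tangent_le hd hmono r (r - b)
  nlinarith [this]

/-- quadratic lower bound gives integrability of the Gibbs weight. -/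
lemma gibbs_integrable (hc₁ : 0 < c₁) (hV : ContDiff ℝ 2 V)
    (hlow : ∀ r : ℝ, c₁ ≤ deriv (deriv V) r) (τ : ℝ) :
    Integrable (fun r : ℝ => Real.exp (τ * r - V r)) := by
  have hV1 : Differentiable ℝ V := hV.differentiable two_ne_zero
  have hV2 : Differentiable ℝ (deriv V) := derivV_diff hV
  have hd : ∀ x : ℝ, HasDerivAt (fun u => V u - c₁ / 2 * u ^ 2) (deriv V x - c₁ * x) x := by
    intro x
    have h1 : HasDerivAt (fun u : ℝ => c₁ / 2 * u ^ 2) (c₁ * x) x := by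
      have := (hasDerivAt_pow 2 x).const_mul (c₁ / 2)
      exact this.congr_deriv (by push_cast; ring)
    exact (hV1 x).hasDerivAt.sub h1
  have hd' : ∀ x : ℝ, HasDerivAt (fun u => deriv V u - c₁ * u) (deriv (deriv V) x - c₁) x := by
    intro x
    have h1 : HasDerivAt (fun u : ℝ => c₁ * u) c₁ x := by
      simpa using (hasDerivAt_id x).const_mul c₁
    exact (hV2 x).hasDerivAt.sub h1
  have hmono : Monotone (fun u => deriv V u - c₁ * u) := by
    refine monotone_of_deriv_nonneg (fun x => (hd' x).differentiableAt) (fun x => ?_)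
    rw [(hd' x).deriv]; linarith [hlow x]
  have hquad : ∀ y : ℝ, V 0 + deriv V 0 * y + c₁ / 2 * y ^ 2 ≤ V y := by
    intro y
    have := tangent_le hd hmono 0 y
    nlinarith [this]
  set m : ℝ := (τ - deriv V 0) / c₁ with hm
  set K : ℝ := Real.exp (-V 0 + c₁ / 2 * m ^ 2) with hK
  have hbound : ∀ r : ℝ, Real.exp (τ * r - V r) ≤ K * Real.exp (-(c₁ / 2) * (r - m) ^ 2) := by
    intro r
    rw [hK, ← Real.exp_add]
    apply Real.exp_le_exp.2
    have := hquad r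
    have hexp : -V 0 + c₁ / 2 * m ^ 2 + -(c₁ / 2) * (r - m) ^ 2
        = -V 0 + c₁ * m * r - c₁ / 2 * r ^ 2 := by ring
    have hcm : c₁ * m = τ - deriv V 0 := by
      rw [hm]; field_simp
    have h3 : c₁ * m * r = (τ - deriv V 0) * r := by rw [hcm]
    linarith [this, h3]
  have hint : Integrable (fun r : ℝ => K * Real.exp (-(c₁ / 2) * (r - m) ^ 2)) := by
    exact ((integrable_exp_neg_mul_sq (by linarith : (0:ℝ) < c₁ / 2)).comp_sub_right m).const_mul K
  refine hint.mono' ?_ (Filter.Eventually.of_forall fun r => ?_)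
  · have hVc : Continuous V := hV1.continuous
    exact (((continuous_const.mul continuous_id).sub hVc).rexp).aestronglyMeasurable
  · rw [Real.norm_eq_abs, abs_of_pos (Real.exp_pos _)]
    exact hbound r

lemma exp_gibbsG (hc₁ : 0 < c₁) (hV : ContDiff ℝ 2 V)
    (hlow : ∀ r : ℝ, c₁ ≤ deriv (deriv V) r) (τ : ℝ) :
    Real.exp (gibbsG V τ) = ∫ r : ℝ, Real.exp (τ * r - V r) :=
  Real.exp_log (integral_exp_pos (f := fun r => τ * r - V r) (gibbs_integrable hc₁ hV hlow τ))

lemma lintegral_gibbs_weight (hc₁ : 0 < c₁) (hV : ContDiff ℝ 2 V)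
    (hlow : ∀ r : ℝ, c₁ ≤ deriv (deriv V) r) (τ : ℝ) :
    ∫⁻ r : ℝ, ENNReal.ofReal (Real.exp (τ * r - V r)) =
      ENNReal.ofReal (Real.exp (gibbsG V τ)) := by
  rw [exp_gibbsG hc₁ hV hlow τ,
    ofReal_integral_eq_lintegral_ofReal (gibbs_integrable hc₁ hV hlow τ)
      (Filter.Eventually.of_forall fun r => (Real.exp_pos _).le)]

lemma gibbs_isProbability (hc₁ : 0 < c₁) (hV : ContDiff ℝ 2 V)
    (hlow : ∀ r : ℝ, c₁ ≤ deriv (deriv V) r) (τ : ℝ) :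
    IsProbabilityMeasure (gibbsMeasure V τ) := by
  constructor
  rw [gibbsMeasure, withDensity_apply _ MeasurableSet.univ, setLIntegral_univ]
  have : ∀ r : ℝ, ENNReal.ofReal (Real.exp (τ * r - V r - gibbsG V τ)) =
      ENNReal.ofReal (Real.exp (-(gibbsG V τ))) * ENNReal.ofReal (Real.exp (τ * r - V r)) := by
    intro r
    rw [← ENNReal.ofReal_mul (Real.exp_pos _).le, ← Real.exp_add]
    ring_nf
  simp_rw [this]
  have hm : Measurable fun r : ℝ => ENNReal.ofReal (Real.exp (τ * r - V r)) := by
    exact ENNReal.measurable_ofReal.comp (Real.measurable_exp.comp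
      ((measurable_const.mul measurable_id).sub hV.continuous.measurable))
  rw [lintegral_const_mul _ hm, lintegral_gibbs_weight hc₁ hV hlow τ,
    ← ENNReal.ofReal_mul (Real.exp_pos _).le, ← Real.exp_add, neg_add_cancel, Real.exp_zero,
    ENNReal.ofReal_one]

/-- MGF bound for `V'` under the Gibbs measure. -/
lemma gibbs_mgf_bound (hc₁ : 0 < c₁) (hV : ContDiff ℝ 2 V)
    (hlow : ∀ r : ℝ, c₁ ≤ deriv (deriv V) r)
    (hhigh : ∀ r : ℝ, deriv (deriv V) r ≤ c₂) (τ b : ℝ) :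
    ∫⁻ r : ℝ, ENNReal.ofReal (Real.exp (b * deriv V r)) ∂(gibbsMeasure V τ)
      ≤ ENNReal.ofReal (Real.exp (b * τ + c₂ * b ^ 2 / 2)) := by
  have hVc : Continuous (deriv V) := (derivV_diff hV).continuous
  have hmd : Measurable fun r : ℝ => ENNReal.ofReal (Real.exp (τ * r - V r - gibbsG V τ)) := by
    exact ENNReal.measurable_ofReal.comp (Real.measurable_exp.comp
      (((measurable_const.mul measurable_id).sub hV.continuous.measurable).sub measurable_const))
  have hmf : Measurable fun r : ℝ => ENNReal.ofReal (Real.exp (b * deriv V r)) := by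
    exact ENNReal.measurable_ofReal.comp (Real.measurable_exp.comp
      (measurable_const.mul hVc.measurable))
  rw [gibbsMeasure, lintegral_withDensity_eq_lintegral_mul _ hmd hmf]
  have hpt : ∀ r : ℝ,
      (ENNReal.ofReal (Real.exp (τ * r - V r - gibbsG V τ)) *
        ENNReal.ofReal (Real.exp (b * deriv V r)))
      ≤ ENNReal.ofReal (Real.exp (c₂ * b ^ 2 / 2 + b * τ - gibbsG V τ)) *
        ENNReal.ofReal (Real.exp (τ * (r - b) - V (r - b))) := by
    intro r
    rw [← ENNReal.ofReal_mul (Real.exp_pos _).le, ← ENNReal.ofReal_mul (Real.exp_pos _).le,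
      ← Real.exp_add, ← Real.exp_add]
    apply ENNReal.ofReal_le_ofReal
    apply Real.exp_le_exp.2
    have := derivV_bound hV hhigh b r
    nlinarith [this]
  calc ∫⁻ r : ℝ, (fun r => ENNReal.ofReal (Real.exp (τ * r - V r - gibbsG V τ))) r *
        (fun r => ENNReal.ofReal (Real.exp (b * deriv V r))) r
      ≤ ∫⁻ r : ℝ, ENNReal.ofReal (Real.exp (c₂ * b ^ 2 / 2 + b * τ - gibbsG V τ)) *
          ENNReal.ofReal (Real.exp (τ * (r - b) - V (r - b))) := lintegral_mono hpt
    _ = ENNReal.ofReal (Real.exp (c₂ * b ^ 2 / 2 + b * τ - gibbsG V τ)) *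
          ∫⁻ r : ℝ, ENNReal.ofReal (Real.exp (τ * (r - b) - V (r - b))) := by
        apply lintegral_const_mul
        exact ENNReal.measurable_ofReal.comp (Real.measurable_exp.comp
          ((measurable_const.mul (measurable_id.sub measurable_const)).sub
            (hV.continuous.measurable.comp (measurable_id.sub measurable_const))))
    _ = ENNReal.ofReal (Real.exp (c₂ * b ^ 2 / 2 + b * τ - gibbsG V τ)) *
          ENNReal.ofReal (Real.exp (gibbsG V τ)) := by
        rw [lintegral_sub_right_eq_self (fun u => ENNReal.ofReal (Real.exp (τ * u - V u))) b,
          lintegral_gibbs_weight hc₁ hV hlow τ]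
    _ = ENNReal.ofReal (Real.exp (b * τ + c₂ * b ^ 2 / 2)) := by
        rw [← ENNReal.ofReal_mul (Real.exp_pos _).le, ← Real.exp_add]
        ring_nf

end Gibbs

lemma lintegral_pi_prod {n : ℕ} (μ : Measure ℝ) [SigmaFinite μ] (f : ℝ → ENNReal)
    (hf : Measurable f) :
    ∫⁻ x : Fin n → ℝ, ∏ j, f (x j) ∂(Measure.pi fun _ : Fin n => μ)
      = (∫⁻ r, f r ∂μ) ^ n := by
  induction n with
  | zero => simp [Measure.pi_of_empty]
  | succ n ih =>
    have hmp := measurePreserving_piFinSuccAbove (fun _ : Fin (n + 1) => μ) 0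
    have hmF : Measurable fun p : ℝ × (Fin n → ℝ) => f p.1 * ∏ j, f (p.2 j) :=
      (hf.comp measurable_fst).mul
        (Finset.measurable_prod _ fun j _ => hf.comp ((measurable_pi_apply j).comp measurable_snd))
    have step : ∫⁻ x : Fin (n + 1) → ℝ, ∏ j, f (x j) ∂(Measure.pi fun _ => μ)
        = ∫⁻ p : ℝ × (Fin n → ℝ), f p.1 * ∏ j, f (p.2 j)
            ∂(μ.prod (Measure.pi fun _ : Fin n => μ)) := by
      rw [← hmp.lintegral_comp hmF]
      refine lintegral_congr fun x => ?_
      simp [MeasurableEquiv.piFinSuccAbove, Fin.prod_univ_succ, Fin.insertNthEquiv,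
        Fin.succAbove, Fin.tail]
    have hg : AEMeasurable (fun y : Fin n → ℝ => ∏ j, f (y j))
        (Measure.pi fun _ : Fin n => μ) :=
      (Finset.measurable_prod _ fun j _ => hf.comp (measurable_pi_apply j)).aemeasurable
    rw [step, lintegral_prod_mul hf.aemeasurable hg, ih, pow_succ]
    ring

lemma lintegral_ofReal_gauss {b : ℝ} (hb : 0 < b) :
    ∫⁻ t : ℝ, ENNReal.ofReal (Real.exp (-b * t ^ 2)) = ENNReal.ofReal (Real.sqrt (π / b)) := by
  rw [← integral_gaussian b,
    ← ofReal_integral_eq_lintegral_ofReal (integrable_exp_neg_mul_sq hb)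
      (Filter.Eventually.of_forall fun t => (Real.exp_pos _).le)]

/-- Gaussian linearization: `∫ exp(a s t - t²/2) dt = exp(α s²) √(2π)` with `a = √(2α)`. -/
lemma gauss_linearize {α : ℝ} (hα : 0 < α) (s : ℝ) :
    ∫⁻ t : ℝ, ENNReal.ofReal (Real.exp (Real.sqrt (2 * α) * s * t - t ^ 2 / 2))
      = ENNReal.ofReal (Real.exp (α * s ^ 2)) * ENNReal.ofReal (Real.sqrt (2 * π)) := by
  set a := Real.sqrt (2 * α) with ha
  have ha2 : a ^ 2 = 2 * α := Real.sq_sqrt (by linarith)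
  have hpt : ∀ t : ℝ, a * s * t - t ^ 2 / 2
      = α * s ^ 2 + (-(1/2) * (t - a * s) ^ 2) := by
    intro t; nlinarith [ha2]
  simp_rw [hpt, Real.exp_add, ENNReal.ofReal_mul (Real.exp_pos _).le]
  rw [lintegral_const_mul _ (by
    exact ENNReal.measurable_ofReal.comp (Real.measurable_exp.comp
      (measurable_const.mul ((measurable_id.sub measurable_const).pow_const 2))))]
  congr 1
  rw [lintegral_sub_right_eq_self
    (fun u => ENNReal.ofReal (Real.exp (-(1/2) * u ^ 2))) (a * s),
    lintegral_ofReal_gauss (by norm_num : (0:ℝ) < 1/2)]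
  congr 1
  rw [show π / (1/2) = 2 * π by ring]

/-- for `l ≥ 1`, `τ ∈ ℝ` and `α > 0` with `2c₂α/l < 1`, the block average
of `V'` under the `l`-fold product Gibbs measure satisfies
`∫ exp(α ((1/l) Σ_j V'(r_j) - τ)²) dλ_τ^{⊗l} ≤ (1 - 2c₂α/l)^{-1/2}`. -/
theorem product_gibbs_block_average_exp_square_bound
    (V : ℝ → ℝ) (c₁ c₂ : ℝ) (hc₁ : 0 < c₁)
    (hV : ContDiff ℝ 2 V)
    (hlow : ∀ r : ℝ, c₁ ≤ deriv (deriv V) r)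
    (hhigh : ∀ r : ℝ, deriv (deriv V) r ≤ c₂)
    (l : ℕ) (hl : 1 ≤ l) (τ α : ℝ) (hα : 0 < α)
    (hsmall : 2 * c₂ * α / l < 1) :
    (∫ x : Fin l → ℝ,
        Real.exp (α * ((1 / (l : ℝ)) * ∑ j : Fin l, deriv V (x j) - τ) ^ 2)
      ∂(Measure.pi fun _ : Fin l => gibbsMeasure V τ))
      ≤ (1 - 2 * c₂ * α / l) ^ (-(1:ℝ) / 2) := by
  have hl0 : (0:ℝ) < l := by exact_mod_cast hl
  set q : ℝ := 2 * c₂ * α / l with hqdef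
  have h1q : 0 < 1 - q := by linarith [hsmall]
  set a : ℝ := Real.sqrt (2 * α) with ha
  have ha2 : a ^ 2 = 2 * α := Real.sq_sqrt (by linarith)
  set μ := gibbsMeasure V τ with hμ
  haveI : IsProbabilityMeasure μ := gibbs_isProbability hc₁ hV hlow τ
  set Pl := Measure.pi fun _ : Fin l => μ with hPl
  haveI : IsProbabilityMeasure Pl := by rw [hPl]; infer_instance
  set S : (Fin l → ℝ) → ℝ := fun x => (1 / (l:ℝ)) * ∑ j, deriv V (x j) - τ with hSdef
  have hVc : Continuous (deriv V) := (derivV_diff hV).continuous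
  have hSm : Measurable S :=
    ((Finset.measurable_sum Finset.univ fun j _ =>
      hVc.measurable.comp (measurable_pi_apply j)).const_mul _).sub measurable_const
  have hsqpi : (0:ℝ) < Real.sqrt (2 * π) := Real.sqrt_pos.2 (by positivity)
  -- inner bound for fixed t
  have inner : ∀ t : ℝ, (∫⁻ x, ENNReal.ofReal (Real.exp (a * S x * t - t ^ 2 / 2)) ∂Pl)
      ≤ ENNReal.ofReal (Real.exp (-((1 - q) / 2) * t ^ 2)) := by
    intro t
    set b : ℝ := a * t / l with hb
    have hmg : Measurable fun r : ℝ => ENNReal.ofReal (Real.exp (b * deriv V r)) := by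
      exact ENNReal.measurable_ofReal.comp (Real.measurable_exp.comp
        (measurable_const.mul hVc.measurable))
    have hpt : ∀ x : Fin l → ℝ, ENNReal.ofReal (Real.exp (a * S x * t - t ^ 2 / 2))
        = ENNReal.ofReal (Real.exp (-(a * τ * t) - t ^ 2 / 2)) *
          ∏ j, ENNReal.ofReal (Real.exp (b * deriv V (x j))) := by
      intro x
      have h1 : a * S x * t - t ^ 2 / 2
          = (-(a * τ * t) - t ^ 2 / 2) + ∑ j, b * deriv V (x j) := by
        rw [hSdef]
        simp only [← Finset.mul_sum]
        rw [hb]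
        field_simp
        ring
      rw [h1, Real.exp_add, ENNReal.ofReal_mul (Real.exp_pos _).le, Real.exp_sum,
        ENNReal.ofReal_prod_of_nonneg (fun j _ => (Real.exp_pos _).le)]
    calc (∫⁻ x, ENNReal.ofReal (Real.exp (a * S x * t - t ^ 2 / 2)) ∂Pl)
        = ENNReal.ofReal (Real.exp (-(a * τ * t) - t ^ 2 / 2)) *
            ∫⁻ x, ∏ j, ENNReal.ofReal (Real.exp (b * deriv V (x j))) ∂Pl := by
          simp_rw [hpt]
          exact lintegral_const_mul _
            (Finset.measurable_prod _ fun j _ => hmg.comp (measurable_pi_apply j))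
      _ = ENNReal.ofReal (Real.exp (-(a * τ * t) - t ^ 2 / 2)) *
            (∫⁻ r, ENNReal.ofReal (Real.exp (b * deriv V r)) ∂μ) ^ l := by
          rw [hPl, lintegral_pi_prod μ _ hmg]
      _ ≤ ENNReal.ofReal (Real.exp (-(a * τ * t) - t ^ 2 / 2)) *
            (ENNReal.ofReal (Real.exp (b * τ + c₂ * b ^ 2 / 2))) ^ l := by
          gcongr
          exact gibbs_mgf_bound hc₁ hV hlow hhigh τ b
      _ = ENNReal.ofReal (Real.exp ((-(a * τ * t) - t ^ 2 / 2) +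
            l * (b * τ + c₂ * b ^ 2 / 2))) := by
          rw [← ENNReal.ofReal_pow (Real.exp_pos _).le, ← Real.exp_nat_mul,
            ← ENNReal.ofReal_mul (Real.exp_pos _).le, ← Real.exp_add]
      _ = ENNReal.ofReal (Real.exp (-((1 - q) / 2) * t ^ 2)) := by
          congr 1
          congr 1
          have hl' : (l:ℝ) ≠ 0 := hl0.ne'
          have key1 : (l:ℝ) * (b * τ) = a * t * τ := by rw [hb]; field_simp
          have key2 : (l:ℝ) * (c₂ * b ^ 2 / 2) = c₂ * α * t ^ 2 / l := by
            have hb2 : b ^ 2 = a ^ 2 * t ^ 2 / (l:ℝ) ^ 2 := by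
              rw [hb, div_pow, mul_pow]
            rw [hb2, ha2]
            field_simp
          rw [hqdef, mul_add, key1, key2]
          field_simp
          ring
  -- main bound after multiplying by √(2π)
  have hintm : Measurable fun x : Fin l → ℝ =>
      ENNReal.ofReal (Real.exp (α * S x ^ 2)) := by
    exact ENNReal.measurable_ofReal.comp (Real.measurable_exp.comp
      ((hSm.pow_const 2).const_mul α))
  have hswapm : Measurable fun p : (Fin l → ℝ) × ℝ =>
      ENNReal.ofReal (Real.exp (a * S p.1 * p.2 - p.2 ^ 2 / 2)) := by
    exact ENNReal.measurable_ofReal.comp (Real.measurable_exp.comp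
      ((((hSm.comp measurable_fst).const_mul a).mul measurable_snd).sub
        ((measurable_snd.pow_const 2).div_const 2)))
  have hmain : (∫⁻ x, ENNReal.ofReal (Real.exp (α * S x ^ 2)) ∂Pl) *
      ENNReal.ofReal (Real.sqrt (2 * π)) ≤ ENNReal.ofReal (Real.sqrt (2 * π / (1 - q))) := by
    calc (∫⁻ x, ENNReal.ofReal (Real.exp (α * S x ^ 2)) ∂Pl) * ENNReal.ofReal (Real.sqrt (2 * π))
        = ∫⁻ x, ENNReal.ofReal (Real.exp (α * S x ^ 2)) * ENNReal.ofReal (Real.sqrt (2 * π)) ∂Pl :=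
          (lintegral_mul_const _ hintm).symm
      _ = ∫⁻ x, (∫⁻ t : ℝ, ENNReal.ofReal (Real.exp (a * S x * t - t ^ 2 / 2))) ∂Pl := by
          refine lintegral_congr fun x => ?_
          rw [ha, gauss_linearize hα (S x)]
      _ = ∫⁻ t : ℝ, (∫⁻ x, ENNReal.ofReal (Real.exp (a * S x * t - t ^ 2 / 2)) ∂Pl) := by
          exact lintegral_lintegral_swap (f := fun x t =>
            ENNReal.ofReal (Real.exp (a * S x * t - t ^ 2 / 2))) hswapm.aemeasurable
      _ ≤ ∫⁻ t : ℝ, ENNReal.ofReal (Real.exp (-((1 - q) / 2) * t ^ 2)) :=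
          lintegral_mono inner
      _ = ENNReal.ofReal (Real.sqrt (π / ((1 - q) / 2))) :=
          lintegral_ofReal_gauss (by linarith : (0:ℝ) < (1 - q) / 2)
      _ = ENNReal.ofReal (Real.sqrt (2 * π / (1 - q))) := by
          rw [show π / ((1 - q) / 2) = 2 * π / (1 - q) by
            field_simp]
  -- divide and convert back
  have hdiv : (∫⁻ x, ENNReal.ofReal (Real.exp (α * S x ^ 2)) ∂Pl)
      ≤ ENNReal.ofReal ((1 - q) ^ (-(1:ℝ) / 2)) := by
    have h2 := (ENNReal.le_div_iff_mul_le
      (Or.inl (by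
        rw [ne_eq, ENNReal.ofReal_eq_zero, not_le]
        exact hsqpi))
      (Or.inl ENNReal.ofReal_ne_top)).2 hmain
    refine h2.trans (le_of_eq ?_)
    rw [← ENNReal.ofReal_div_of_pos hsqpi]
    congr 1
    rw [Real.sqrt_div (by positivity : (0:ℝ) ≤ 2 * π) (1 - q)]
    rw [show -(1:ℝ) / 2 = -(1 / 2) by ring, Real.rpow_neg h1q.le, ← Real.sqrt_eq_rpow,
      ← Real.sqrt_inv]
    field_simp
    rw [one_div, Real.sqrt_inv, mul_inv_cancel₀ (Real.sqrt_pos.2 h1q).ne']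
  -- convert Bochner integral to lintegral
  have hsm2 : AEStronglyMeasurable (fun x : Fin l → ℝ => Real.exp (α * S x ^ 2)) Pl := by
    exact (Real.measurable_exp.comp ((hSm.pow_const 2).const_mul α)).aestronglyMeasurable
  show (∫ x, Real.exp (α * S x ^ 2) ∂Pl) ≤ (1 - q) ^ (-(1:ℝ) / 2)
  rw [integral_eq_lintegral_of_nonneg_ae
    (Filter.Eventually.of_forall fun x => (Real.exp_pos _).le) hsm2]
  calc (∫⁻ x, ENNReal.ofReal (Real.exp (α * S x ^ 2)) ∂Pl).toReal
      ≤ (ENNReal.ofReal ((1 - q) ^ (-(1:ℝ) / 2))).toReal :=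
        ENNReal.toReal_mono ENNReal.ofReal_ne_top hdiv
    _ = (1 - q) ^ (-(1:ℝ) / 2) := ENNReal.toReal_ofReal (Real.rpow_nonneg h1q.le _)
end
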